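/- Soundness of absolute-error symmetrization of an interval linear form: let l(x) = [a⁻,a⁺] + Σ_v [a_v⁻,a_v⁺]·x_v and suppose x_v ∈ J_v for each v where J_v is a closed bounded interval. Define c_v = (a_v⁻ + a_v⁺)/2 and the new constant interval I' = [a⁻,a⁺] + Σ_v ((a_v⁺ − a_v⁻)/2)·[−s_v, s_v] where s_v = max(|inf J_v|, |sup J_v|). Then every r in the evaluation of l at x also lies in the evaluation of l'(x) = I' + Σ_v c_v·x_v at x. -/

import Mathlib

open Pointwise

open Finset in
def evalS {V : Type*} [Fintype V] (I : Set ℝ) (C : V → Set ℝ) (x : V → ℝ) : Set ℝ :=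
  {r | ∃ c ∈ I, ∃ t : V → ℝ, (∀ v, t v ∈ C v) ∧ r = c + ∑ v, t v * x v}

lemma mem_smul_Icc_of_abs_le {a s d : ℝ} (ha : 0 ≤ a) (hs : 0 ≤ s)
    (h : |d| ≤ a * s) : d ∈ a • Set.Icc (-s) s := by
  rcases ha.eq_or_lt with heq | hlt
  · have hd0 : d = 0 := by
      have : |d| ≤ 0 := by rw [← heq] at h; linarith
      exact abs_eq_zero.mp (le_antisymm this (abs_nonneg _))
    exact ⟨0, ⟨by linarith, hs⟩, by simp [hd0]⟩
  · refine ⟨d / a, ⟨?_, ?_⟩, by simp only [smul_eq_mul]; field_simp⟩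
    · rw [neg_le, ← neg_div, div_le_iff₀ hlt, mul_comm]
      linarith [(abs_le.mp h).1]
    · rw [div_le_iff₀ hlt, mul_comm]
      linarith [(abs_le.mp h).2]

open Finset in
theorem symmetrization_sound {V : Type*} [Fintype V]
    (am ap : ℝ) (lo hi jlo jhi : V → ℝ) (x : V → ℝ) (r : ℝ)
    (hx : ∀ v, x v ∈ Set.Icc (jlo v) (jhi v))
    (hr : r ∈ evalS (Set.Icc am ap) (fun v => Set.Icc (lo v) (hi v)) x) :
    r ∈ evalS
      (Set.Icc am ap +
        ∑ v, ((hi v - lo v) / 2) •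
          Set.Icc (-(max |jlo v| |jhi v|)) (max |jlo v| |jhi v|))
      (fun v => Set.Icc ((lo v + hi v) / 2) ((lo v + hi v) / 2)) x := by
  obtain ⟨c, hc, t, ht, rfl⟩ := hr
  set cv : V → ℝ := fun v => (lo v + hi v) / 2 with hcv
  set d : V → ℝ := fun v => (t v - cv v) * x v with hd
  have hmem : ∀ v, d v ∈ ((hi v - lo v) / 2) •
      Set.Icc (-(max |jlo v| |jhi v|)) (max |jlo v| |jhi v|) := by
    intro v
    have h1 := (ht v).1
    have h2 := (ht v).2
    have hxl := (hx v).1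
    have hxr := (hx v).2
    set s := max |jlo v| |jhi v| with hs
    have hs0 : 0 ≤ s := le_trans (abs_nonneg _) (le_max_left _ _)
    have hxs : |x v| ≤ s := by
      rw [abs_le]
      constructor
      · have : -|jlo v| ≤ jlo v := neg_abs_le _
        have : -s ≤ -|jlo v| := neg_le_neg (le_max_left _ _)
        linarith [neg_abs_le (jlo v)]
      · exact le_trans (le_trans hxr (le_abs_self _)) (le_max_right _ _)
    apply mem_smul_Icc_of_abs_le (by linarith) hs0
    rw [hd, abs_mul]
    have h3 : |t v - cv v| ≤ (hi v - lo v) / 2 := by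
      rw [abs_le, hcv]
      constructor <;> · simp only; linarith
    exact mul_le_mul h3 hxs (abs_nonneg _) (by linarith)
  refine ⟨c + ∑ v, d v, ?_, cv, fun v => ⟨le_refl _, le_refl _⟩, ?_⟩
  · exact Set.add_mem_add hc ((Set.mem_fintype_sum _ _).mpr ⟨d, hmem, rfl⟩)
  · rw [add_assoc, ← Finset.sum_add_distrib]
    congr 1
    apply Finset.sum_congr rfl
    intro v _
    simp only [hd, hcv]
    ring
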